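/- Let g ≥ 1. The quotient by simultaneous conjugation of the set 𝒰 = {(A₁, B₁, …, A_g, B_g, C₁, C₂, C₃) : each Aₖ, Bₖ is a unit quaternion, each Cᵢ is a purely imaginary unit quaternion, C₁C₂C₃ = ∏ₖ [Aₖ, Bₖ], and Re(∏ₖ [Aₖ, Bₖ]) > 1/2} is in bijection with the (unquotiented) set U = {(A₁, B₁, …, A_g, B_g) ∈ Sp(1)^{2g} : Re(∏ₖ [Aₖ, Bₖ]) > 1/2}. (Here Re(P) > 1/2 corresponds to the trace condition Tr > 1 on the corresponding SU(2) matrix; this is the key identification of neighborhoods used to prove that χ(SI(Y)) = ±|H₁(Y;ℤ)| for rational homology spheres.) -/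

import Mathlib

open Quaternion

noncomputable def qi : ℍ[ℝ] := ⟨0, 1, 0, 0⟩
noncomputable def qj : ℍ[ℝ] := ⟨0, 0, 1, 0⟩
noncomputable def qk : ℍ[ℝ] := ⟨0, 0, 0, 1⟩

lemma norm_qi : ‖qi‖ = 1 := by
  have h : ‖qi‖ * ‖qi‖ = 1 := by
    rw [← Quaternion.normSq_eq_norm_mul_self, Quaternion.normSq_def']; simp [qi]
  nlinarith [norm_nonneg qi]

lemma norm_qj : ‖qj‖ = 1 := by
  have h : ‖qj‖ * ‖qj‖ = 1 := by
    rw [← Quaternion.normSq_eq_norm_mul_self, Quaternion.normSq_def']; simp [qj]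
  nlinarith [norm_nonneg qj]

lemma norm_qk : ‖qk‖ = 1 := by
  have h : ‖qk‖ * ‖qk‖ = 1 := by
    rw [← Quaternion.normSq_eq_norm_mul_self, Quaternion.normSq_def']; simp [qk]
  nlinarith [norm_nonneg qk]

lemma re_qi : qi.re = 0 := rfl
lemma re_qj : qj.re = 0 := rfl
lemma re_qk : qk.re = 0 := rfl

lemma qi_mul_qj_mul_neg_qk : qi * qj * (-qk) = 1 := by
  ext <;> simp only [Quaternion.re_mul, Quaternion.imI_mul, Quaternion.imJ_mul, Quaternion.imK_mul,
    Quaternion.re_neg, Quaternion.imI_neg, Quaternion.imJ_neg, Quaternion.imK_neg] <;> simp [qi, qj, qk]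

/-- Simultaneous conjugation by unit quaternions, as a relation on tuples of quaternions. -/
def uConj {ι : Type} (x y : ι → ℍ[ℝ]) : Prop :=
  ∃ D : ℍ[ℝ], ‖D‖ = 1 ∧ ∀ k, y k = D * x k * D⁻¹

theorem uConj_equivalence (ι : Type) : Equivalence (@uConj ι) := by
  constructor
  · intro x
    exact ⟨1, norm_one, fun k => by simp⟩
  · rintro x y ⟨D, hD, h⟩
    have hD0 : D ≠ 0 := by
      intro h0; rw [h0, norm_zero] at hD; norm_num at hD
    refine ⟨D⁻¹, by rw [norm_inv, hD]; norm_num, fun k => ?_⟩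
    rw [h k, inv_inv]
    simp [mul_assoc, inv_mul_cancel₀ hD0, inv_mul_cancel_left₀ hD0]
  · rintro x y z ⟨D, hD, h⟩ ⟨E, hE, h'⟩
    refine ⟨E * D, by rw [norm_mul, hD, hE]; norm_num, fun k => ?_⟩
    rw [h' k, h k, mul_inv_rev]
    simp [mul_assoc]

/-- The setoid of simultaneous conjugation on tuples of quaternions. -/
def conjSetoid (ι : Type) : Setoid (ι → ℍ[ℝ]) := ⟨uConj, uConj_equivalence ι⟩

/-- The setoid of simultaneous conjugation restricted to a conjugation-invariant subset. -/
def conjSetoidOn {ι : Type} (S : Set (ι → ℍ[ℝ])) : Setoid S :=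
  (conjSetoid ι).comap Subtype.val

/-- The (ordered) product of commutators `∏ₖ [Aₖ, Bₖ]`. -/
noncomputable def commProd {g : ℕ} (A B : Fin g → ℍ[ℝ]) : ℍ[ℝ] :=
  (List.ofFn fun k => A k * B k * (A k)⁻¹ * (B k)⁻¹).prod

/-- The open set `𝒰` of tuples `(A₁, B₁, …, A_g, B_g, C₁, C₂, C₃)` of unit quaternions with
each `Cᵢ` purely imaginary, `C₁C₂C₃ = ∏ₖ [Aₖ, Bₖ]` and `Re(∏ₖ [Aₖ, Bₖ]) > 1/2`. -/
def U9 (g : ℕ) : Set ((Fin g ⊕ Fin g) ⊕ Fin 3 → ℍ[ℝ]) :=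
  {x | (∀ k : Fin g, ‖x (Sum.inl (Sum.inl k))‖ = 1) ∧
    (∀ k : Fin g, ‖x (Sum.inl (Sum.inr k))‖ = 1) ∧
    (∀ j : Fin 3, ‖x (Sum.inr j)‖ = 1 ∧ (x (Sum.inr j)).re = 0) ∧
    x (Sum.inr 0) * x (Sum.inr 1) * x (Sum.inr 2) =
      commProd (fun k => x (Sum.inl (Sum.inl k))) (fun k => x (Sum.inl (Sum.inr k))) ∧
    (commProd (fun k => x (Sum.inl (Sum.inl k))) (fun k => x (Sum.inl (Sum.inr k)))).re
      > 1 / 2}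

/-- The open set `U` of pairs of `g`-tuples of unit quaternions with
`Re(∏ₖ [Aₖ, Bₖ]) > 1/2`. -/
def U9' (g : ℕ) : Type :=
  {AB : (Fin g → ℍ[ℝ]) × (Fin g → ℍ[ℝ]) //
    (∀ k, ‖AB.1 k‖ = 1) ∧ (∀ k, ‖AB.2 k‖ = 1) ∧ (commProd AB.1 AB.2).re > 1 / 2}

lemma normSq_of_norm_one {x : ℍ[ℝ]} (h : ‖x‖ = 1) : normSq x = 1 := by
  rw [Quaternion.normSq_eq_norm_mul_self, h, mul_one]

lemma norm_one_of_normSq_one {x : ℍ[ℝ]} (h : normSq x = 1) : ‖x‖ = 1 := by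
  have h2 : ‖x‖ * ‖x‖ = 1 := by rw [← Quaternion.normSq_eq_norm_mul_self, h]
  nlinarith [norm_nonneg x]

lemma unit_mul_star {x : ℍ[ℝ]} (h : ‖x‖ = 1) : x * star x = 1 := by
  rw [Quaternion.self_mul_star, normSq_of_norm_one h]; exact_mod_cast rfl

lemma unit_star_mul {x : ℍ[ℝ]} (h : ‖x‖ = 1) : star x * x = 1 := by
  rw [Quaternion.star_mul_self, normSq_of_norm_one h]; exact_mod_cast rfl

lemma unit_inv_eq_star {x : ℍ[ℝ]} (h : ‖x‖ = 1) : x⁻¹ = star x :=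
  eq_inv_of_mul_eq_one_left (unit_star_mul h) |>.symm

lemma re_mul_comm (a b : ℍ[ℝ]) : (a * b).re = (b * a).re := by
  simp [Quaternion.re_mul]; ring

lemma re_conj {D : ℍ[ℝ]} (hD : D ≠ 0) (x : ℍ[ℝ]) : (D * x * D⁻¹).re = x.re := by
  rw [re_mul_comm, ← mul_assoc, inv_mul_cancel₀ hD, one_mul]

lemma norm_conj {D : ℍ[ℝ]} (hD : ‖D‖ = 1) (x : ℍ[ℝ]) : ‖D * x * D⁻¹‖ = ‖x‖ := by
  rw [norm_mul, norm_mul, hD, norm_inv, hD]; norm_num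

lemma qconj_mul {D : ℍ[ℝ]} (hD : D ≠ 0) (x y : ℍ[ℝ]) :
    (D * x * D⁻¹) * (D * y * D⁻¹) = D * (x * y) * D⁻¹ := by
  simp [mul_assoc, inv_mul_cancel_left₀ hD]

lemma qconj_inv (D x : ℍ[ℝ]) : (D * x * D⁻¹)⁻¹ = D * x⁻¹ * D⁻¹ := by
  rw [mul_inv_rev, mul_inv_rev, inv_inv, mul_assoc]

lemma conj_comp (D E x : ℍ[ℝ]) :
    (E * D) * x * (E * D)⁻¹ = E * (D * x * D⁻¹) * E⁻¹ := by
  rw [mul_inv_rev]; simp [mul_assoc]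

lemma conj_smul {r : ℝ} (hr : r ≠ 0) (D x : ℍ[ℝ]) :
    (r • D) * x * (r • D)⁻¹ = D * x * D⁻¹ := by
  rw [smul_inv₀, smul_mul_assoc, smul_mul_assoc, mul_smul_comm, smul_smul,
    mul_inv_cancel₀ hr, one_smul]

lemma list_prod_conj {D : ℍ[ℝ]} (hD : D ≠ 0) (l : List ℍ[ℝ]) :
    (l.map fun x => D * x * D⁻¹).prod = D * l.prod * D⁻¹ := by
  induction l with
  | nil => simp [mul_inv_cancel₀ hD]
  | cons a l ih => simp only [List.map_cons, List.prod_cons, ih, qconj_mul hD]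

lemma commProd_conj {g : ℕ} {D : ℍ[ℝ]} (hD : D ≠ 0) (A B : Fin g → ℍ[ℝ]) :
    commProd (fun k => D * A k * D⁻¹) (fun k => D * B k * D⁻¹) = D * commProd A B * D⁻¹ := by
  rw [commProd, commProd, ← list_prod_conj hD, List.map_ofFn]
  refine congrArg List.prod (congrArg List.ofFn (funext fun k => ?_))
  simp only [Function.comp]
  rw [qconj_inv D (A k), qconj_inv D (B k), qconj_mul hD, qconj_mul hD, qconj_mul hD]

lemma list_prod_norm_one (l : List ℍ[ℝ]) (h : ∀ x ∈ l, ‖x‖ = 1) : ‖l.prod‖ = 1 := by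
  induction l with
  | nil => simp
  | cons a l ih =>
    rw [List.prod_cons, norm_mul, h a List.mem_cons_self,
      ih fun x hx => h x (List.mem_cons_of_mem a hx), one_mul]

lemma norm_commProd {g : ℕ} {A B : Fin g → ℍ[ℝ]} (hA : ∀ k, ‖A k‖ = 1)
    (hB : ∀ k, ‖B k‖ = 1) : ‖commProd A B‖ = 1 := by
  apply list_prod_norm_one
  intro x hx
  rw [List.mem_ofFn] at hx
  obtain ⟨k, rfl⟩ := hx
  rw [norm_mul, norm_mul, norm_mul, norm_inv, norm_inv, hA, hB]; norm_num

noncomputable def tP (P : ℍ[ℝ]) : ℝ := Real.sqrt (P.re ^ 2 + P.imK ^ 2)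

noncomputable def C2q (P : ℍ[ℝ]) : ℍ[ℝ] := ⟨0, P.imK / tP P, P.re / tP P, 0⟩

noncomputable def C3q (P : ℍ[ℝ]) : ℍ[ℝ] := star (qi * C2q P) * P

lemma tP_pos {P : ℍ[ℝ]} (hPre : 1 / 2 < P.re) : 0 < tP P := by
  apply Real.sqrt_pos.2; nlinarith [sq_nonneg P.imK]

lemma tP_sq {P : ℍ[ℝ]} (hPre : 1 / 2 < P.re) : tP P ^ 2 = P.re ^ 2 + P.imK ^ 2 := by
  rw [tP, Real.sq_sqrt]; nlinarith [sq_nonneg P.imK]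

lemma norm_C2q {P : ℍ[ℝ]} (hPre : 1 / 2 < P.re) : ‖C2q P‖ = 1 := by
  apply norm_one_of_normSq_one
  have ht := tP_pos hPre
  have ht2 := tP_sq hPre
  rw [Quaternion.normSq_def', C2q]
  field_simp
  nlinarith

lemma re_C2q (P : ℍ[ℝ]) : (C2q P).re = 0 := rfl

lemma imJ_C2q_pos {P : ℍ[ℝ]} (hPre : 1 / 2 < P.re) : 0 < (C2q P).imJ := by
  have ht := tP_pos hPre
  show 0 < P.re / tP P
  positivity

lemma norm_C3q {P : ℍ[ℝ]} (hPn : ‖P‖ = 1) (hPre : 1 / 2 < P.re) : ‖C3q P‖ = 1 := by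
  rw [C3q, norm_mul, Quaternion.norm_star, norm_mul, hPn, norm_qi, norm_C2q hPre]
  norm_num

lemma re_C3q {P : ℍ[ℝ]} (hPre : 1 / 2 < P.re) : (C3q P).re = 0 := by
  have ht := (tP_pos hPre).ne'
  rw [C3q, Quaternion.re_mul]
  simp only [Quaternion.re_star, Quaternion.imI_star, Quaternion.imJ_star, Quaternion.imK_star, Quaternion.re_mul, Quaternion.imI_mul, Quaternion.imJ_mul, Quaternion.imK_mul]
  simp [qi, C2q, Quaternion.re_mul, Quaternion.imI_mul, Quaternion.imJ_mul,
    Quaternion.imK_mul]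
  field_simp
  ring

lemma prod_C2q_C3q {P : ℍ[ℝ]} (hPre : 1 / 2 < P.re) : qi * C2q P * C3q P = P := by
  have h1 : ‖qi * C2q P‖ = 1 := by rw [norm_mul, norm_qi, norm_C2q hPre, one_mul]
  rw [C3q, ← mul_assoc, unit_mul_star h1, one_mul]

lemma norm_conj' {D : ℍ[ℝ]} (hD : D ≠ 0) (x : ℍ[ℝ]) : ‖D * x * D⁻¹‖ = ‖x‖ := by
  rw [norm_mul, norm_mul, norm_inv]
  have h : ‖D‖ ≠ 0 := norm_ne_zero_iff.2 hD
  field_simp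

lemma conj_of_swap {D x y : ℍ[ℝ]} (hD : D ≠ 0) (h : D * x = y * D) : D * x * D⁻¹ = y := by
  rw [h, mul_assoc, mul_inv_cancel₀ hD, mul_one]

lemma imag_sq {x : ℍ[ℝ]} (hn : ‖x‖ = 1) (hr : x.re = 0) : x * x = -1 := by
  have hs := normSq_of_norm_one hn
  rw [Quaternion.normSq_def'] at hs
  ext
  · simp [Quaternion.re_mul, hr]; nlinarith
  · simp [Quaternion.imI_mul, hr]; ring
  · simp [Quaternion.imJ_mul, hr]; ring
  · simp [Quaternion.imK_mul, hr]; ring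

lemma standard_unique {P c2 c3 : ℍ[ℝ]} (hPre : 1 / 2 < P.re)
    (hc2n : ‖c2‖ = 1) (hc2re : c2.re = 0) (hc2K : c2.imK = 0) (hc2J : 0 < c2.imJ)
    (hc3re : c3.re = 0)
    (hprod : qi * c2 * c3 = P) : c2 = C2q P ∧ c3 = C3q P := by
  have h1 : ‖qi * c2‖ = 1 := by rw [norm_mul, norm_qi, hc2n, one_mul]
  have hc3 : c3 = star (qi * c2) * P := by
    calc c3 = (star (qi * c2) * (qi * c2)) * c3 := by rw [unit_star_mul h1, one_mul]
    _ = star (qi * c2) * P := by rw [mul_assoc, hprod]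
  set a := c2.imI with ha
  set b := c2.imJ with hb
  have hab : a ^ 2 + b ^ 2 = 1 := by
    have hs := normSq_of_norm_one hc2n
    rw [Quaternion.normSq_def', hc2re, hc2K] at hs
    nlinarith
  have hkey : a * P.re = b * P.imK := by
    have h0 := hc3re
    rw [hc3, Quaternion.re_mul] at h0
    simp only [Quaternion.re_star, Quaternion.imI_star, Quaternion.imJ_star, Quaternion.imK_star, Quaternion.re_mul, Quaternion.imI_mul, Quaternion.imJ_mul, Quaternion.imK_mul] at h0
    simp [Quaternion.re_star, Quaternion.imI_star, Quaternion.imJ_star, Quaternion.imK_star,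
      Quaternion.re_mul, Quaternion.imI_mul, Quaternion.imJ_mul, Quaternion.imK_mul,
      qi, hc2re, hc2K] at h0
    nlinarith [h0]
  have ht := tP_pos hPre
  have ht2 := tP_sq hPre
  have hbt : b * tP P = P.re := by
    have hsq : (b * tP P) ^ 2 = P.re ^ 2 := by
      linear_combination b ^ 2 * ht2 - (a * P.re + b * P.imK) * hkey + P.re ^ 2 * hab
    nlinarith [hsq, mul_pos hc2J ht, hPre]
  have hat : a * tP P = P.imK := by
    have hre : (0:ℝ) < P.re := by linarith
    have h5 : a * tP P * P.re = P.imK * P.re := by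
      linear_combination tP P * hkey + P.imK * hbt
    exact mul_right_cancel₀ (ne_of_gt hre) h5
  have hc2eq : c2 = C2q P := by
    ext
    · rw [hc2re]; rfl
    · show a = P.imK / tP P
      rw [eq_div_iff (ne_of_gt ht)]; exact hat
    · show b = P.re / tP P
      rw [eq_div_iff (ne_of_gt ht)]; exact hbt
    · rw [hc2K]; rfl
  exact ⟨hc2eq, by rw [hc3, hc2eq]; rfl⟩

lemma qi_sq : qi * qi = -1 := by ext <;> simp only [Quaternion.re_mul, Quaternion.imI_mul, Quaternion.imJ_mul, Quaternion.imK_mul] <;> simp [qi]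

lemma qi_ne_zero : qi ≠ 0 := by
  intro h
  have := congrArg QuaternionAlgebra.imI h
  simp [qi] at this

lemma exists_conj_to_qi {x : ℍ[ℝ]} (hn : ‖x‖ = 1) (hr : x.re = 0) :
    ∃ D : ℍ[ℝ], D ≠ 0 ∧ D * x * D⁻¹ = qi := by
  by_cases hx : x = -qi
  · refine ⟨qj, ?_, ?_⟩
    · intro h
      have := congrArg QuaternionAlgebra.imJ h
      simp [qj] at this
    · have hqj : qj ≠ 0 := by
        intro h; have := congrArg QuaternionAlgebra.imJ h; simp [qj] at this
      apply conj_of_swap hqj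
      rw [hx]
      ext <;> simp only [Quaternion.re_mul, Quaternion.imI_mul, Quaternion.imJ_mul, Quaternion.imK_mul, Quaternion.re_neg, Quaternion.imI_neg, Quaternion.imJ_neg, Quaternion.imK_neg] <;> simp [qi, qj]
  · refine ⟨1 - qi * x, ?_, ?_⟩
    · intro h
      have h1 : qi * x = 1 := (sub_eq_zero.1 h).symm
      have h2 : x = -qi := by
        have h3 := congrArg (fun z => -qi * z) h1
        simp only [mul_one] at h3
        rw [← mul_assoc, neg_mul, qi_sq, neg_neg, one_mul] at h3
        exact h3
      exact hx h2
    · have hD : (1 : ℍ[ℝ]) - qi * x ≠ 0 := by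
        intro h
        have h1 : qi * x = 1 := (sub_eq_zero.1 h).symm
        have h2 : x = -qi := by
          have h3 := congrArg (fun z => -qi * z) h1
          simp only [mul_one] at h3
          rw [← mul_assoc, neg_mul, qi_sq, neg_neg, one_mul] at h3
          exact h3
        exact hx h2
      apply conj_of_swap hD
      rw [sub_mul, one_mul, mul_assoc, imag_sq hn hr, mul_sub, mul_one, ← mul_assoc, qi_sq]
      rw [mul_neg_one, neg_one_mul, sub_neg_eq_add, sub_neg_eq_add, add_comm]

lemma exists_conj_plane {c : ℍ[ℝ]} (hre : c.re = 0) (hne : c.imJ ≠ 0 ∨ c.imK ≠ 0) :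
    ∃ D : ℍ[ℝ], D ≠ 0 ∧ D * qi * D⁻¹ = qi ∧ (D * c * D⁻¹).imK = 0 ∧
      0 < (D * c * D⁻¹).imJ := by
  set p := c.imJ with hp
  set q := c.imK with hq
  have hpq : 0 < p ^ 2 + q ^ 2 := by
    rcases hne with h | h
    · positivity
    · positivity
  set r := Real.sqrt (p ^ 2 + q ^ 2) with hrdef
  have hr : 0 < r := Real.sqrt_pos.2 hpq
  have hr2 : p ^ 2 + q ^ 2 = r ^ 2 := (Real.sq_sqrt hpq.le).symm
  have hpr : p ^ 2 ≤ r ^ 2 := by nlinarith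
  have hple : -r ≤ p := by nlinarith
  by_cases hcase : p = -r
  · -- q = 0, use D = qi
    have hq0 : q = 0 := by nlinarith
    refine ⟨qi, qi_ne_zero, ?_, ?_⟩
    · apply conj_of_swap qi_ne_zero rfl
    · have hconj : qi * c * qi⁻¹ = ⟨0, c.imI, r, 0⟩ := by
        apply conj_of_swap qi_ne_zero
        ext <;> simp only [Quaternion.re_mul, Quaternion.imI_mul, Quaternion.imJ_mul, Quaternion.imK_mul, Quaternion.re_mul ⟨0, c.imI, r, 0⟩, Quaternion.imI_mul ⟨0, c.imI, r, 0⟩, Quaternion.imJ_mul ⟨0, c.imI, r, 0⟩, Quaternion.imK_mul ⟨0, c.imI, r, 0⟩] <;> simp [qi, hre, ← hp, ← hq, hq0, hcase]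
      rw [hconj]
      exact ⟨rfl, hr⟩
  · have hrp : 0 < r + p := by
      rcases lt_or_eq_of_le hple with h | h
      · linarith
      · exact absurd h.symm hcase
    set D : ℍ[ℝ] := ⟨r + p, -q, 0, 0⟩ with hD
    have hD0 : D ≠ 0 := by
      intro h
      have := congrArg QuaternionAlgebra.re h
      simp [hD] at this
      linarith
    refine ⟨D, hD0, ?_, ?_⟩
    · apply conj_of_swap hD0
      ext <;> simp only [Quaternion.re_mul, Quaternion.imI_mul, Quaternion.imJ_mul, Quaternion.imK_mul] <;> simp [qi, hD] <;> ring
    · have hconj : D * c * D⁻¹ = ⟨0, c.imI, r, 0⟩ := by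
        apply conj_of_swap hD0
        ext
        · simp only [Quaternion.re_mul, Quaternion.imI_mul, Quaternion.imJ_mul, Quaternion.imK_mul, Quaternion.re_mul ⟨0, c.imI, r, 0⟩, Quaternion.imI_mul ⟨0, c.imI, r, 0⟩, Quaternion.imJ_mul ⟨0, c.imI, r, 0⟩, Quaternion.imK_mul ⟨0, c.imI, r, 0⟩]; simp [hD, hre, ← hp, ← hq]; ring
        · simp only [Quaternion.re_mul, Quaternion.imI_mul, Quaternion.imJ_mul, Quaternion.imK_mul, Quaternion.re_mul ⟨0, c.imI, r, 0⟩, Quaternion.imI_mul ⟨0, c.imI, r, 0⟩, Quaternion.imJ_mul ⟨0, c.imI, r, 0⟩, Quaternion.imK_mul ⟨0, c.imI, r, 0⟩]; simp [hD, hre, ← hp, ← hq]; ring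
        · simp only [Quaternion.re_mul, Quaternion.imI_mul, Quaternion.imJ_mul, Quaternion.imK_mul, Quaternion.re_mul ⟨0, c.imI, r, 0⟩, Quaternion.imI_mul ⟨0, c.imI, r, 0⟩, Quaternion.imJ_mul ⟨0, c.imI, r, 0⟩, Quaternion.imK_mul ⟨0, c.imI, r, 0⟩]; simp [hD, hre, ← hp, ← hq]; linear_combination hr2
        · simp only [Quaternion.re_mul, Quaternion.imI_mul, Quaternion.imJ_mul, Quaternion.imK_mul, Quaternion.re_mul ⟨0, c.imI, r, 0⟩, Quaternion.imI_mul ⟨0, c.imI, r, 0⟩, Quaternion.imJ_mul ⟨0, c.imI, r, 0⟩, Quaternion.imK_mul ⟨0, c.imI, r, 0⟩]; simp [hD, hre, ← hp, ← hq]; ring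
      rw [hconj]
      exact ⟨rfl, hr⟩

lemma conj_neg (D x : ℍ[ℝ]) : D * (-x) * D⁻¹ = -(D * x * D⁻¹) := by
  simp

lemma exists_standardizer {c1 c2 : ℍ[ℝ]} (h1n : ‖c1‖ = 1) (h1r : c1.re = 0)
    (h2n : ‖c2‖ = 1) (h2r : c2.re = 0) (hne : c2 ≠ c1) (hne' : c2 ≠ -c1) :
    ∃ D : ℍ[ℝ], ‖D‖ = 1 ∧ D * c1 * D⁻¹ = qi ∧ (D * c2 * D⁻¹).imK = 0 ∧
      0 < (D * c2 * D⁻¹).imJ := by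
  obtain ⟨D₁, hD₁, hconj1⟩ := exists_conj_to_qi h1n h1r
  set c2' := D₁ * c2 * D₁⁻¹ with hc2'
  have h2n' : ‖c2'‖ = 1 := by rw [hc2', norm_conj' hD₁, h2n]
  have h2r' : c2'.re = 0 := by rw [hc2', re_conj hD₁, h2r]
  have hcancel : ∀ z : ℍ[ℝ], D₁ * c2 * D₁⁻¹ = D₁ * z * D₁⁻¹ → c2 = z := by
    intro z h
    exact mul_left_cancel₀ hD₁ (mul_right_cancel₀ (inv_ne_zero hD₁) h)
  have hplane : c2'.imJ ≠ 0 ∨ c2'.imK ≠ 0 := by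
    by_contra hcon
    push_neg at hcon
    obtain ⟨hJ0, hK0⟩ := hcon
    have hs := normSq_of_norm_one h2n'
    rw [Quaternion.normSq_def', h2r', hJ0, hK0] at hs
    have h1 : (c2'.imI - 1) * (c2'.imI + 1) = 0 := by nlinarith
    rcases mul_eq_zero.1 h1 with h | h
    · have hI : c2'.imI = 1 := by linarith
      have : c2' = qi := by
        ext <;> simp [qi, h2r', hI, hJ0, hK0, Quaternion.re_neg, Quaternion.imI_neg, Quaternion.imJ_neg, Quaternion.imK_neg]
      rw [hc2', ← hconj1] at this
      exact hne (hcancel c1 this)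
    · have hI : c2'.imI = -1 := by linarith
      have : c2' = -qi := by
        ext <;> simp only [Quaternion.re_neg, Quaternion.imI_neg, Quaternion.imJ_neg, Quaternion.imK_neg] <;> simp [qi, h2r', hI, hJ0, hK0]
      rw [hc2', ← hconj1, ← conj_neg] at this
      exact hne' (hcancel (-c1) this)
  obtain ⟨D₂, hD₂, hfix, hK, hJ⟩ := exists_conj_plane h2r' hplane
  set D := D₂ * D₁ with hDdef
  have hD0 : D ≠ 0 := mul_ne_zero hD₂ hD₁
  have hcc1 : D * c1 * D⁻¹ = qi := by
    rw [hDdef, conj_comp, hconj1, hfix]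
  have hcc2 : D * c2 * D⁻¹ = D₂ * c2' * D₂⁻¹ := by
    rw [hDdef, conj_comp, hc2']
  have hnD : ‖D‖ ≠ 0 := norm_ne_zero_iff.2 hD0
  refine ⟨‖D‖⁻¹ • D, ?_, ?_, ?_, ?_⟩
  · rw [norm_smul, norm_inv, norm_norm, inv_mul_cancel₀ hnD]
  · rw [conj_smul (inv_ne_zero hnD), hcc1]
  · rw [conj_smul (inv_ne_zero hnD), hcc2]; exact hK
  · rw [conj_smul (inv_ne_zero hnD), hcc2]; exact hJ

noncomputable def stdTuple {g : ℕ} (A B : Fin g → ℍ[ℝ]) : (Fin g ⊕ Fin g) ⊕ Fin 3 → ℍ[ℝ] :=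
  Sum.elim (Sum.elim A B) ![qi, C2q (commProd A B), C3q (commProd A B)]

lemma stdTuple_mem {g : ℕ} {A B : Fin g → ℍ[ℝ]} (hA : ∀ k, ‖A k‖ = 1)
    (hB : ∀ k, ‖B k‖ = 1) (hP : 1 / 2 < (commProd A B).re) : stdTuple A B ∈ U9 g := by
  have hPn := norm_commProd hA hB
  refine ⟨hA, hB, ?_, ?_, hP⟩
  · intro j
    fin_cases j
    · exact ⟨norm_qi, rfl⟩
    · exact ⟨norm_C2q hP, rfl⟩
    · exact ⟨norm_C3q hPn hP, re_C3q hP⟩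
  · show qi * C2q (commProd A B) * C3q (commProd A B) = _
    exact prod_C2q_C3q hP

lemma imK_C2q (P : ℍ[ℝ]) : (C2q P).imK = 0 := rfl
lemma imI_C2q (P : ℍ[ℝ]) : (C2q P).imI = P.imK / tP P := rfl
lemma imJ_C2q (P : ℍ[ℝ]) : (C2q P).imJ = P.re / tP P := rfl

lemma real_conj_trivial {D : ℍ[ℝ]} (hD0 : D ≠ 0) (h1 : D.imI = 0) (h2 : D.imJ = 0)
    (h3 : D.imK = 0) (x : ℍ[ℝ]) : D * x * D⁻¹ = x := by
  have hre : D.re ≠ 0 := by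
    intro h
    exact hD0 (by ext <;> simp [h, h1, h2, h3])
  have hD : D = ((D.re : ℝ) : ℍ[ℝ]) := by ext <;> simp [h1, h2, h3]
  rw [hD, ← Quaternion.coe_inv, Quaternion.coe_commutes, mul_assoc, ← Quaternion.coe_mul,
    mul_inv_cancel₀ hre, Quaternion.coe_one, mul_one]

lemma swap_of_conj {D x y : ℍ[ℝ]} (hD0 : D ≠ 0) (h : y = D * x * D⁻¹) : D * x = y * D := by
  rw [h, mul_assoc (D * x), inv_mul_cancel₀ hD0, mul_one]

/-- For `g ≥ 1`, the quotient of `𝒰` by simultaneous conjugation is in bijection with the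
unquotiented set `U ⊆ Sp(1)^{2g}`. -/
theorem neighborhood_quotient_bijective_unquotiented (g : ℕ) (hg : 1 ≤ g) :
    Nonempty (Quotient (conjSetoidOn (U9 g)) ≃ U9' g) := by
  classical
  have hmap : ∀ y : U9' g, stdTuple y.1.1 y.1.2 ∈ U9 g :=
    fun y => stdTuple_mem y.2.1 y.2.2.1 y.2.2.2
  set h : U9' g → Quotient (conjSetoidOn (U9 g)) :=
    fun y => ⟦⟨stdTuple y.1.1 y.1.2, hmap y⟩⟧ with hh
  have hinj : Function.Injective h := by
    intro y₁ y₂ hEq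
    obtain ⟨D, hDn, hDk⟩ := Quotient.exact hEq
    have hD0 : D ≠ 0 := by intro h0; rw [h0, norm_zero] at hDn; norm_num at hDn
    have hb₁ : 0 < (C2q (commProd y₁.1.1 y₁.1.2)).imJ := imJ_C2q_pos y₁.2.2.2
    have hb₂ : 0 < (C2q (commProd y₂.1.1 y₂.1.2)).imJ := imJ_C2q_pos y₂.2.2.2
    have e0 : qi = D * qi * D⁻¹ := by simpa [stdTuple] using hDk (Sum.inr 0)
    have s0 : D * qi = qi * D := swap_of_conj hD0 e0
    have hK : D.imK = 0 := by
      have h5 := congrArg QuaternionAlgebra.imJ s0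
      simp only [Quaternion.imJ_mul] at h5; simp [qi] at h5
      linarith
    have hJ : D.imJ = 0 := by
      have h5 := congrArg QuaternionAlgebra.imK s0
      simp only [Quaternion.imK_mul] at h5; simp [qi] at h5
      linarith
    have e1 : C2q (commProd y₂.1.1 y₂.1.2) = D * C2q (commProd y₁.1.1 y₁.1.2) * D⁻¹ := by
      simpa [stdTuple] using hDk (Sum.inr 1)
    have s1 : D * C2q (commProd y₁.1.1 y₁.1.2) = C2q (commProd y₂.1.1 y₂.1.2) * D :=
      swap_of_conj hD0 e1
    have hI : D.imI = 0 := by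
      have h5 := congrArg QuaternionAlgebra.imK s1
      rw [Quaternion.imK_mul, Quaternion.imK_mul] at h5
      rw [re_C2q, imK_C2q, re_C2q, imK_C2q, hJ, hK] at h5
      have h6 : D.imI * ((C2q (commProd y₁.1.1 y₁.1.2)).imJ +
          (C2q (commProd y₂.1.1 y₂.1.2)).imJ) = 0 := by linear_combination h5
      rcases mul_eq_zero.1 h6 with h7 | h7
      · exact h7
      · linarith
    have htriv := real_conj_trivial hD0 hI hJ hK
    have hA : y₁.1.1 = y₂.1.1 := by
      funext k
      exact ((hDk (Sum.inl (Sum.inl k))).trans (htriv _)).symm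
    have hB : y₁.1.2 = y₂.1.2 := by
      funext k
      exact ((hDk (Sum.inl (Sum.inr k))).trans (htriv _)).symm
    exact Subtype.ext (Prod.ext hA hB)
  have hsurj : Function.Surjective h := by
    intro qq
    obtain ⟨a, ha⟩ := Quotient.exists_rep qq
    obtain ⟨hA, hB, hC, hprod, hPre⟩ := a.2
    set x := a.1 with hxdef
    set P := commProd (fun k => x (Sum.inl (Sum.inl k))) (fun k => x (Sum.inl (Sum.inr k)))
      with hPdef
    have hPn : ‖P‖ = 1 := norm_commProd hA hB
    set c1 := x (Sum.inr 0) with hc1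
    set c2 := x (Sum.inr 1) with hc2
    set c3 := x (Sum.inr 2) with hc3
    have hne : c2 ≠ c1 := by
      intro hcc
      have : P.re = 0 := by
        rw [← hprod, hcc, imag_sq (hC 0).1 (hC 0).2, neg_one_mul, Quaternion.re_neg,
          (hC 2).2, neg_zero]
      linarith
    have hne' : c2 ≠ -c1 := by
      intro hcc
      have : P.re = 0 := by
        rw [← hprod, hcc, mul_neg, imag_sq (hC 0).1 (hC 0).2, neg_neg, one_mul, (hC 2).2]
      linarith
    obtain ⟨D, hDn, hs1, hs2K, hs2J⟩ :=
      exists_standardizer (hC 0).1 (hC 0).2 (hC 1).1 (hC 1).2 hne hne'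
    have hD0 : D ≠ 0 := by intro h0; rw [h0, norm_zero] at hDn; norm_num at hDn
    set A' : Fin g → ℍ[ℝ] := fun k => D * x (Sum.inl (Sum.inl k)) * D⁻¹ with hA'def
    set B' : Fin g → ℍ[ℝ] := fun k => D * x (Sum.inl (Sum.inr k)) * D⁻¹ with hB'def
    have hP' : commProd A' B' = D * P * D⁻¹ := commProd_conj hD0 _ _
    have hP're : 1 / 2 < (commProd A' B').re := by rw [hP', re_conj hD0]; exact hPre
    have hA'n : ∀ k, ‖A' k‖ = 1 := fun k => by rw [hA'def]; rw [norm_conj' hD0]; exact hA k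
    have hB'n : ∀ k, ‖B' k‖ = 1 := fun k => by rw [hB'def]; rw [norm_conj' hD0]; exact hB k
    set y : U9' g := ⟨(A', B'), hA'n, hB'n, hP're⟩ with hy
    refine ⟨y, ?_⟩
    have hprodconj : qi * (D * c2 * D⁻¹) * (D * c3 * D⁻¹) = commProd A' B' := by
      rw [← hs1, qconj_mul hD0, qconj_mul hD0, hprod, hP']
    obtain ⟨hstd2, hstd3⟩ := standard_unique hP're (by rw [norm_conj' hD0]; exact (hC 1).1)
      (by rw [re_conj hD0]; exact (hC 1).2) hs2K hs2J
      (by rw [re_conj hD0]; exact (hC 2).2) hprodconj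
    have hk : ∀ k, stdTuple A' B' k = D * x k * D⁻¹ := by
      intro k
      rcases k with (k | k) | j
      · rfl
      · rfl
      · fin_cases j
        · show qi = D * c1 * D⁻¹
          exact hs1.symm
        · show C2q (commProd A' B') = D * c2 * D⁻¹
          exact hstd2.symm
        · show C3q (commProd A' B') = D * c3 * D⁻¹
          exact hstd3.symm
    have hrel : (conjSetoidOn (U9 g)).r a ⟨stdTuple A' B', stdTuple_mem hA'n hB'n hP're⟩ :=
      ⟨D, hDn, hk⟩
    calc h y = ⟦⟨stdTuple A' B', stdTuple_mem hA'n hB'n hP're⟩⟧ := rfl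
    _ = ⟦a⟧ := Quotient.sound ((conjSetoidOn (U9 g)).iseqv.symm hrel)
    _ = qq := ha
  exact ⟨(Equiv.ofBijective h ⟨hinj, hsurj⟩).symm⟩
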